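/- Let H be a Hermitian operator on ℂⁿ with orthonormal eigenbasis v₁, …, v_n and real eigenvalues λ₁, …, λ_n satisfying λ_n = 0 and Δ < λ_k ≤ 1 for all k ≠ n, where Δ ∈ (0,1]. Let l = ⌈log₂(1/Δ)⌉ + 1 and let p̂ be the operator on ℂ^{2^l} given by p̂ = Σ_{q=0}^{2^l−1} (q/2^l) |q⟩⟨q| in the standard basis. Let x₀ = 2^{−l/2} Σ_{q=0}^{2^l−1} |q⟩ (the uniform superposition) and let ψ₀ = Σ_{j=1}^n α_j v_j be a unit vector. Set τ = 2π/Δ. Then exp(−i τ (H ⊗ p̂)) (ψ₀ ⊗ x₀) = α_n v_n ⊗ x₀ + Σ_{k=1}^{n−1} α_k v_k ⊗ (γ_k x₀ + Γ_k w_k), where for each k ≠ n: γ_k = ⟨x₀, exp(−i λ_k τ p̂) x₀⟩ satisfies |γ_k| < 1/2, w_k is a unit vector in ℂ^{2^l} orthogonal to x₀, and Γ_k ∈ ℂ satisfies |Γ_k| > √3/2 and |γ_k|² + |Γ_k|² = 1. -/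

import Mathlib

open Finset Matrix Complex
open scoped Kronecker

section helpers

attribute [local instance] Matrix.linftyOpNormedRing Matrix.linftyOpNormedAlgebra

lemma exp_mulVec_eigen {m : Type*} [Fintype m] [DecidableEq m]
    (A : Matrix m m ℂ) (w0 : m → ℂ) (μ : ℂ) (h : A.mulVec w0 = μ • w0) :
    (NormedSpace.exp A).mulVec w0 = Complex.exp μ • w0 := by
  have hpow : ∀ k : ℕ, (A ^ k).mulVec w0 = (μ ^ k) • w0 := by
    intro k
    induction k with
    | zero => simp
    | succ k ih =>
      rw [pow_succ, ← Matrix.mulVec_mulVec, h, Matrix.mulVec_smul, ih,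
        smul_smul, ← pow_succ']
  let L : Matrix m m ℂ →ₗ[ℂ] (m → ℂ) :=
    { toFun := fun B => B.mulVec w0
      map_add' := fun B C => Matrix.add_mulVec B C w0
      map_smul' := fun c B => Matrix.smul_mulVec c B w0 }
  have hsum : Summable fun k : ℕ => ((Nat.factorial k : ℂ))⁻¹ • A ^ k :=
    NormedSpace.expSeries_summable' (𝕂 := ℂ) A
  have hmt := (L.toContinuousLinearMap).map_tsum hsum
  rw [NormedSpace.exp_eq_tsum (𝕂 := ℂ)]
  have h2 : (NormedSpace.exp μ) • w0 = Complex.exp μ • w0 := by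
    rw [Complex.exp_eq_exp_ℂ]
  rw [← h2, NormedSpace.exp_eq_tsum (𝕂 := ℂ)]
  show L (∑' k : ℕ, ((Nat.factorial k : ℂ))⁻¹ • A ^ k) = _
  rw [show (L : Matrix m m ℂ → (m → ℂ)) = (L.toContinuousLinearMap : Matrix m m ℂ → (m → ℂ)) from rfl] at *
  rw [hmt]
  simp only [_root_.map_smul]
  have hLp : ∀ k : ℕ, L.toContinuousLinearMap (A ^ k) = (μ ^ k) • w0 := hpow
  calc ∑' k : ℕ, ((Nat.factorial k : ℂ))⁻¹ • L.toContinuousLinearMap (A ^ k)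
      = ∑' k : ℕ, (((Nat.factorial k : ℂ))⁻¹ * μ ^ k) • w0 := by
        simp only [hLp, smul_smul]
    _ = (∑' k : ℕ, ((Nat.factorial k : ℂ))⁻¹ * μ ^ k) • w0 := by
        rw [Summable.tsum_smul_const]
        exact (NormedSpace.expSeries_summable' (𝕂 := ℂ) μ).congr (by intro b; simp [smul_eq_mul])
    _ = _ := by simp [smul_eq_mul]

end helpers

lemma geom_abs_bound (θ : ℝ) (N : ℕ) (hθ : 0 < θ) (hθπ : θ ≤ Real.pi) :
    ‖∑ q : Fin N, Complex.exp (((-(θ * q)) : ℝ) * I)‖ ≤ Real.pi / θ := by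
  set z : ℂ := Complex.exp ((-θ : ℝ) * I) with hz
  have hpow : ∀ q : ℕ, Complex.exp (((-(θ * q)) : ℝ) * I) = z ^ q := by
    intro q
    rw [hz, ← Complex.exp_nat_mul]
    congr 1
    push_cast
    ring
  have hzre : z.re = Real.cos θ := by
    rw [hz, Complex.exp_ofReal_mul_I_re, Real.cos_neg]
  have hzim : z.im = -Real.sin θ := by
    rw [hz, Complex.exp_ofReal_mul_I_im, Real.sin_neg]
  have hzne : z ≠ 1 := by
    intro hzz
    have : Real.cos θ = 1 := by rw [← hzre, hzz]; simp
    rcases (Real.cos_eq_one_iff θ).1 this with ⟨k, hk⟩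
    have hπ := Real.pi_pos
    rcases lt_trichotomy k 0 with h | h | h
    · have hk1 : k ≤ -1 := by omega
      have : (k : ℝ) ≤ -1 := by exact_mod_cast hk1
      nlinarith
    · simp [h] at hk; linarith
    · have : (1 : ℝ) ≤ (k : ℝ) := by exact_mod_cast h
      nlinarith
  have hsum : (∑ q : Fin N, Complex.exp (((-(θ * q)) : ℝ) * I)) =
      (z ^ N - 1) / (z - 1) := by
    rw [Fin.sum_univ_eq_sum_range fun q => Complex.exp (((-(θ * q)) : ℝ) * I)]
    simp_rw [hpow]
    exact geom_sum_eq hzne N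
  rw [hsum, norm_div]
  have hnum : ‖z ^ N - 1‖ ≤ 2 := by
    calc ‖z ^ N - 1‖ ≤ ‖(z ^ N)‖ + ‖(1:ℂ)‖ :=
          (norm_sub_le _ _)
      _ ≤ 2 := by
          rw [norm_pow, hz, Complex.norm_exp_ofReal_mul_I]
          norm_num
  have hden : 2 * θ / Real.pi ≤ ‖z - 1‖ := by
    have hnsq : Complex.normSq (z - 1) = 2 - 2 * Real.cos θ := by
      rw [Complex.normSq_apply]
      simp only [Complex.sub_re, Complex.sub_im, Complex.one_re, Complex.one_im,
        hzre, hzim]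
      nlinarith [Real.sin_sq_add_cos_sq θ]
    have hcb : Real.cos θ ≤ 1 - 2 / Real.pi ^ 2 * θ ^ 2 :=
      Real.cos_le_one_sub_mul_cos_sq (by rw [abs_of_pos hθ]; exact hθπ)
    have h1 : (2 * θ / Real.pi) ^ 2 ≤ Complex.normSq (z - 1) := by
      rw [hnsq, div_pow, mul_pow]
      have hπ := Real.pi_pos
      rw [div_le_iff₀ (by positivity)]
      have h2' : 2 / Real.pi ^ 2 * θ ^ 2 * Real.pi ^ 2 = 2 * θ ^ 2 := by
        field_simp
      nlinarith [mul_le_mul_of_nonneg_right hcb (sq_nonneg Real.pi)]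
    have := Real.sqrt_le_sqrt h1
    rwa [Real.sqrt_sq (by positivity), ← Complex.norm_def] at this
  have hπ := Real.pi_pos
  have hdpos : 0 < 2 * θ / Real.pi := by positivity
  calc ‖z ^ N - 1‖ / ‖z - 1‖
      ≤ 2 / (2 * θ / Real.pi) := div_le_div₀ (by norm_num) hnum hdpos hden
    _ = Real.pi / θ := by field_simp

lemma kron_mulVec {n N : ℕ} (A : Matrix (Fin n) (Fin n) ℂ) (B : Matrix (Fin N) (Fin N) ℂ)
    (x : Fin n → ℂ) (y : Fin N → ℂ) :
    (A ⊗ₖ B).mulVec (fun p : Fin n × Fin N => x p.1 * y p.2) =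
      fun p : Fin n × Fin N => (A.mulVec x p.1) * (B.mulVec y p.2) := by
  funext p
  simp only [Matrix.mulVec, dotProduct, Fintype.sum_prod_type,
    Matrix.kroneckerMap_apply]
  rw [Finset.sum_mul_sum]
  congr 1; funext j; congr 1; funext l; ring

lemma sum_abs_sq_eq_one_iff {M : ℕ} (f : Fin M → ℂ) :
    (∑ q, ‖f q‖ ^ 2 = 1) ↔ (∑ q, (starRingEnd ℂ) (f q) * f q = 1) := by
  have : ∀ q, ((‖f q‖ ^ 2 : ℝ) : ℂ) = (starRingEnd ℂ) (f q) * f q := by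
    intro q
    rw [Complex.sq_norm, Complex.normSq_eq_conj_mul_self]
  rw [show (∑ q, (starRingEnd ℂ) (f q) * f q) = ((∑ q, ‖f q‖ ^ 2 : ℝ) : ℂ) by
    rw [Complex.ofReal_sum]; exact Finset.sum_congr rfl fun q _ => (this q).symm]
  exact_mod_cast Iff.symm Complex.ofReal_eq_one


/-- One round of the von Neumann measurement scheme.  Evolving
`ψ₀ ⊗ x₀` under `exp(-iτ H ⊗ p̂)` for `τ = 2π/Δ` leaves the zero-eigenvector
component attached to the pointer state `x₀`, while every other eigenvector `v_k`
gets a pointer component `γ_k x₀ + Γ_k w_k` with `|γ_k| < 1/2`, `|Γ_k| > √3/2`,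
`|γ_k|² + |Γ_k|² = 1` and `w_k ⊥ x₀` a unit vector. -/
theorem von_neumann_single_round
    (n : ℕ) (hn : 1 ≤ n)
    (H : Matrix (Fin n) (Fin n) ℂ) (hH : H.IsHermitian)
    (v : Fin n → Fin n → ℂ)
    (horth : ∀ i j, ∑ x, (starRingEnd ℂ) (v i x) * v j x = if i = j then 1 else 0)
    (lam : Fin n → ℝ)
    (heig : ∀ j, H.mulVec (v j) = (lam j : ℂ) • v j)
    (i₀ : Fin n) (Δ : ℝ) (hΔ : 0 < Δ) (hΔ1 : Δ ≤ 1)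
    (h0 : lam i₀ = 0)
    (hgap : ∀ k, k ≠ i₀ → Δ < lam k ∧ lam k ≤ 1)
    (l : ℕ) (hl : l = ⌈Real.logb 2 (1 / Δ)⌉₊ + 1)
    (phat : Matrix (Fin (2 ^ l)) (Fin (2 ^ l)) ℂ)
    (hphat : phat = Matrix.diagonal fun q : Fin (2 ^ l) => ((q : ℕ) : ℂ) / 2 ^ l)
    (x₀ : Fin (2 ^ l) → ℂ)
    (hx₀ : ∀ q, x₀ q = ((1 / Real.sqrt (2 ^ l) : ℝ) : ℂ))
    (α : Fin n → ℂ) (ψ₀ : Fin n → ℂ)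
    (hψ₀ : ∀ x, ψ₀ x = ∑ j, α j * v j x)
    (hunit : ∑ x, ‖ψ₀ x‖ ^ 2 = 1)
    (τ : ℝ) (hτ : τ = 2 * Real.pi / Δ) :
    ∃ γ Γ : Fin n → ℂ, ∃ w : Fin n → Fin (2 ^ l) → ℂ,
      (∀ k, k ≠ i₀ →
        γ k = ∑ q, (starRingEnd ℂ) (x₀ q) *
            ((NormedSpace.exp ((-(Complex.I * lam k * τ)) • phat)).mulVec x₀ q) ∧
        ‖γ k‖ < 1 / 2 ∧
        (∑ q, ‖w k q‖ ^ 2 = 1) ∧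
        (∑ q, (starRingEnd ℂ) (x₀ q) * w k q = 0) ∧
        Real.sqrt 3 / 2 < ‖Γ k‖ ∧
        ‖γ k‖ ^ 2 + ‖Γ k‖ ^ 2 = 1) ∧
      (NormedSpace.exp ((-(Complex.I * τ)) • (H ⊗ₖ phat))).mulVec
          (fun p : Fin n × Fin (2 ^ l) => ψ₀ p.1 * x₀ p.2) =
        fun p : Fin n × Fin (2 ^ l) =>
          α i₀ * v i₀ p.1 * x₀ p.2 +
          ∑ k ∈ Finset.univ.erase i₀,
            α k * v k p.1 * (γ k * x₀ p.2 + Γ k * w k p.2) := by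
  have hπ := Real.pi_pos
  have hNpos : (0:ℝ) < (2:ℝ)^l := by positivity
  have hτpos : 0 < τ := by rw [hτ]; positivity
  -- the pointer register is long enough: Δ * 2^l ≥ 2
  have hΔN : (2:ℝ) ≤ Δ * (2:ℝ)^l := by
    have h1 : Real.logb 2 (1/Δ) ≤ ((⌈Real.logb 2 (1/Δ)⌉₊ : ℕ) : ℝ) := Nat.le_ceil _
    have h2 : (1/Δ : ℝ) = (2:ℝ) ^ Real.logb 2 (1/Δ) :=
      (Real.rpow_logb two_pos (by norm_num) (by positivity)).symm
    have h3 : (2:ℝ) ^ Real.logb 2 (1/Δ) ≤ (2:ℝ) ^ ((⌈Real.logb 2 (1/Δ)⌉₊ : ℕ) : ℝ) :=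
      Real.rpow_le_rpow_of_exponent_le one_le_two h1
    rw [Real.rpow_natCast] at h3
    have h4 : (1/Δ : ℝ) ≤ (2:ℝ) ^ (⌈Real.logb 2 (1/Δ)⌉₊ : ℕ) := h2.le.trans h3
    have h5 : (1:ℝ) ≤ Δ * (2:ℝ) ^ (⌈Real.logb 2 (1/Δ)⌉₊ : ℕ) := by
      calc (1:ℝ) = Δ * (1/Δ) := by field_simp
        _ ≤ Δ * (2:ℝ) ^ (⌈Real.logb 2 (1/Δ)⌉₊ : ℕ) := by
            exact mul_le_mul_of_nonneg_left h4 hΔ.le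
    rw [hl, pow_succ]
    nlinarith [h5]
  -- basic facts about the pointer state
  have hx0conj : ∀ q, (starRingEnd ℂ) (x₀ q) = x₀ q := fun q => by
    rw [hx₀]; exact Complex.conj_ofReal _
  have hx0sq : ∀ q : Fin (2^l), x₀ q * x₀ q = (((2:ℝ)^l)⁻¹ : ℝ) := by
    intro q; rw [hx₀, ← Complex.ofReal_mul]
    congr 1
    rw [div_mul_div_comm, one_mul, Real.mul_self_sqrt (by positivity)]
    push_cast
    field_simp
  have hx0inner : ∑ q, (starRingEnd ℂ) (x₀ q) * x₀ q = 1 := by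
    simp only [hx0conj]
    rw [Finset.sum_congr rfl fun q _ => hx0sq q, Finset.sum_const, Finset.card_univ,
      Fintype.card_fin, nsmul_eq_mul]
    rw [← Complex.ofReal_natCast, ← Complex.ofReal_mul]
    push_cast
    field_simp
  -- the rotation angles
  set θ : Fin n → ℝ := fun k => lam k * τ / 2^l with hθdef
  have hθpos : ∀ k, k ≠ i₀ → 0 < θ k := by
    intro k hk
    have h1 := (hgap k hk).1
    exact div_pos (mul_pos (by linarith) hτpos) hNpos
  have hθπ : ∀ k, k ≠ i₀ → θ k ≤ Real.pi := by
    intro k hk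
    have h1 := (hgap k hk).2
    have h2 := (hgap k hk).1
    simp only [hθdef, hτ]
    rw [div_le_iff₀ hNpos]
    calc lam k * (2*Real.pi/Δ) ≤ 1 * (2*Real.pi/Δ) :=
          mul_le_mul_of_nonneg_right h1 (by positivity)
      _ = 2*Real.pi/Δ := one_mul _
      _ ≤ Real.pi * 2^l := by rw [div_le_iff₀ hΔ]; nlinarith [hΔN]
  -- the evolved pointer states
  set u : Fin n → Fin (2^l) → ℂ :=
    fun k => (NormedSpace.exp ((-(Complex.I * lam k * τ)) • phat)).mulVec x₀ with hudef
  have hu' : ∀ k q, u k q =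
      Complex.exp ((-(Complex.I * lam k * τ)) * (((q:ℕ):ℂ) / 2^l)) * x₀ q := by
    intro k q
    have hd : (-(Complex.I * lam k * τ)) • phat =
        Matrix.diagonal (fun r : Fin (2^l) =>
          (-(Complex.I * lam k * τ)) * (((r:ℕ):ℂ) / 2^l)) := by
      rw [hphat, ← Matrix.diagonal_smul]
      congr 1
    simp only [hudef]
    rw [hd, Matrix.exp_diagonal, Matrix.mulVec_diagonal]
    congr 1
    rw [Pi.coe_exp, ← Complex.exp_eq_exp_ℂ]
  have hu : ∀ k q, u k q = Complex.exp (((-(θ k * q)) : ℝ) * I) * x₀ q := by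
    intro k q
    rw [hu' k q]
    congr 2
    simp only [hθdef]
    push_cast
    ring
  have hui₀ : u i₀ = x₀ := by
    funext q
    rw [hu, show θ i₀ = 0 by simp [hθdef, h0], ]
    norm_num
  have huinner : ∀ k, ∑ q, (starRingEnd ℂ) (u k q) * u k q = 1 := by
    intro k
    have hterm : ∀ q, (starRingEnd ℂ) (u k q) * u k q = (((2:ℝ)^l)⁻¹ : ℝ) := by
      intro q
      rw [hu, _root_.map_mul, hx0conj]
      have hE : (starRingEnd ℂ) (Complex.exp (((-(θ k * q)) : ℝ) * I)) *
          Complex.exp (((-(θ k * q)) : ℝ) * I) = 1 := by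
        rw [← Complex.exp_conj, ← Complex.exp_add,
          show (starRingEnd ℂ) ((((-(θ k * q)) : ℝ):ℂ) * I) + (((-(θ k * q)) : ℝ):ℂ) * I = 0 by
            rw [_root_.map_mul, Complex.conj_ofReal, Complex.conj_I]; ring]
        exact Complex.exp_zero
      calc (starRingEnd ℂ) (Complex.exp (((-(θ k * q)) : ℝ) * I)) * x₀ q *
            (Complex.exp (((-(θ k * q)) : ℝ) * I) * x₀ q)
          = ((starRingEnd ℂ) (Complex.exp (((-(θ k * q)) : ℝ) * I)) *
              Complex.exp (((-(θ k * q)) : ℝ) * I)) * (x₀ q * x₀ q) := by ring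
        _ = (((2:ℝ)^l)⁻¹ : ℝ) := by rw [hE, one_mul, hx0sq]
    rw [Finset.sum_congr rfl fun q _ => hterm q, Finset.sum_const, Finset.card_univ,
      Fintype.card_fin, nsmul_eq_mul, ← Complex.ofReal_natCast, ← Complex.ofReal_mul]
    push_cast
    field_simp
  -- γ
  set γ : Fin n → ℂ := fun k => ∑ q, (starRingEnd ℂ) (x₀ q) * u k q with hγdef
  have hinner_ux : ∀ k, ∑ q, (starRingEnd ℂ) (u k q) * x₀ q = (starRingEnd ℂ) (γ k) := by
    intro k
    simp only [hγdef, map_sum, _root_.map_mul, Complex.conj_conj]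
    exact Finset.sum_congr rfl fun q _ => mul_comm _ _
  have hγlt : ∀ k, k ≠ i₀ → ‖γ k‖ < 1/2 := by
    intro k hk
    have hγeq : γ k = ((((2:ℝ)^l)⁻¹ : ℝ) : ℂ) *
        ∑ q : Fin (2^l), Complex.exp (((-(θ k * q)) : ℝ) * I) := by
      simp only [hγdef]
      rw [Finset.mul_sum]
      refine Finset.sum_congr rfl fun q _ => ?_
      rw [hx0conj, hu]
      calc x₀ q * (Complex.exp (((-(θ k * q)) : ℝ) * I) * x₀ q)
          = (x₀ q * x₀ q) * Complex.exp (((-(θ k * q)) : ℝ) * I) := by ring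
        _ = _ := by rw [hx0sq]
    rw [hγeq, norm_mul, Complex.norm_real, Real.norm_eq_abs, abs_of_pos (by positivity)]
    have hb := geom_abs_bound (θ k) (2^l) (hθpos k hk) (hθπ k hk)
    have hlam := hgap k hk
    have hcast : ∀ q : Fin (2^l), (((q:ℕ):ℝ)) = ((q:ℕ):ℝ) := fun _ => rfl
    calc ((2:ℝ)^l)⁻¹ * ‖∑ q : Fin (2^l), Complex.exp (((-(θ k * q)) : ℝ) * I)‖
        ≤ ((2:ℝ)^l)⁻¹ * (Real.pi / θ k) :=
          mul_le_mul_of_nonneg_left hb (by positivity)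
      _ = Δ / (2 * lam k) := by
          have hlamne : lam k ≠ 0 := ne_of_gt (lt_trans hΔ hlam.1)
          have hθk : θ k = 2 * Real.pi * lam k / (Δ * 2^l) := by
            simp only [hθdef, hτ]
            field_simp
          rw [hθk, div_div_eq_mul_div,
            eq_div_iff (by nlinarith [hlam.1] : (0:ℝ) < 2 * lam k).ne']
          field_simp
      _ < 1/2 := by
          rw [div_lt_div_iff₀ (by linarith [hlam.1]) (by norm_num)]
          linarith [hlam.1]
  -- Γ
  set Γ : Fin n → ℂ := fun k => ((Real.sqrt (1 - ‖γ k‖^2) : ℝ) : ℂ) with hΓdef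
  have hΓconj : ∀ k, (starRingEnd ℂ) (Γ k) = Γ k := fun k => Complex.conj_ofReal _
  have hΓabs : ∀ k, ‖Γ k‖ = Real.sqrt (1 - ‖γ k‖^2) := fun k =>
    Complex.norm_of_nonneg (Real.sqrt_nonneg _)
  have hγsq : ∀ k, k ≠ i₀ → ‖γ k‖^2 < 1/4 := by
    intro k hk
    have h1 := hγlt k hk
    nlinarith [norm_nonneg (γ k)]
  have hsq1 : ∀ k, k ≠ i₀ → ‖γ k‖^2 + ‖Γ k‖^2 = 1 := by
    intro k hk
    rw [hΓabs, Real.sq_sqrt (by nlinarith [hγsq k hk])]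
    ring
  have hΓgt : ∀ k, k ≠ i₀ → Real.sqrt 3 / 2 < ‖Γ k‖ := by
    intro k hk
    rw [hΓabs]
    have h34 : Real.sqrt ((3:ℝ)/4) = Real.sqrt 3 / 2 := by
      rw [show (3:ℝ)/4 = 3 * (1/2)^2 by norm_num, Real.sqrt_mul (by norm_num),
        Real.sqrt_sq (by norm_num)]
      ring
    rw [← h34]
    exact Real.sqrt_lt_sqrt (by norm_num) (by nlinarith [hγsq k hk])
  have hΓmul : ∀ k, k ≠ i₀ → Γ k * Γ k = ((1 - ‖γ k‖^2 : ℝ) : ℂ) := by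
    intro k hk
    simp only [hΓdef]
    rw [← Complex.ofReal_mul, Real.mul_self_sqrt (by nlinarith [hγsq k hk])]
  have hΓne : ∀ k, k ≠ i₀ → Γ k ≠ 0 := by
    intro k hk h
    have h1 := hΓgt k hk
    rw [h, norm_zero] at h1
    nlinarith [Real.sqrt_nonneg 3]
  -- w
  set w : Fin n → Fin (2^l) → ℂ := fun k q => (Γ k)⁻¹ * (u k q - γ k * x₀ q) with hwdef
  have horthw : ∀ k, k ≠ i₀ → ∑ q, (starRingEnd ℂ) (x₀ q) * w k q = 0 := by
    intro k hk
    have hterm : ∀ q, (starRingEnd ℂ) (x₀ q) * w k q =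
        (Γ k)⁻¹ * ((starRingEnd ℂ) (x₀ q) * u k q) -
        (Γ k)⁻¹ * γ k * ((starRingEnd ℂ) (x₀ q) * x₀ q) := by
      intro q; simp only [hwdef]; ring
    rw [Finset.sum_congr rfl fun q _ => hterm q, Finset.sum_sub_distrib,
      ← Finset.mul_sum, ← Finset.mul_sum, hx0inner]
    simp only [hγdef]
    ring
  have hwunit : ∀ k, k ≠ i₀ → ∑ q, ‖w k q‖^2 = 1 := by
    intro k hk
    rw [sum_abs_sq_eq_one_iff]
    have hterm : ∀ q, (starRingEnd ℂ) (w k q) * w k q =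
        (Γ k)⁻¹ * (Γ k)⁻¹ * ((starRingEnd ℂ) (u k q) * u k q)
        - (Γ k)⁻¹ * (Γ k)⁻¹ * γ k * ((starRingEnd ℂ) (u k q) * x₀ q)
        - (Γ k)⁻¹ * (Γ k)⁻¹ * (starRingEnd ℂ) (γ k) * ((starRingEnd ℂ) (x₀ q) * u k q)
        + (Γ k)⁻¹ * (Γ k)⁻¹ * ((starRingEnd ℂ) (γ k) * γ k) *
            ((starRingEnd ℂ) (x₀ q) * x₀ q) := by
      intro q
      simp only [hwdef, _root_.map_mul, map_sub, map_inv₀, hΓconj, hx0conj]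
      ring
    rw [Finset.sum_congr rfl fun q _ => hterm q]
    rw [Finset.sum_add_distrib, Finset.sum_sub_distrib, Finset.sum_sub_distrib,
      ← Finset.mul_sum, ← Finset.mul_sum, ← Finset.mul_sum, ← Finset.mul_sum,
      huinner, hinner_ux, hx0inner]
    have hgg : (starRingEnd ℂ) (γ k) * γ k = ((‖γ k‖^2 : ℝ) : ℂ) := by
      rw [Complex.sq_norm]
      exact Complex.normSq_eq_conj_mul_self.symm
    have key : ((1:ℂ) - ((‖γ k‖^2 : ℝ) : ℂ)) = Γ k * Γ k := by
      rw [hΓmul k hk]; push_cast; ring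
    have hinv : (Γ k)⁻¹ * Γ k = 1 := inv_mul_cancel₀ (hΓne k hk)
    have hgg2 : γ k * (starRingEnd ℂ) (γ k) = ((‖γ k‖^2 : ℝ) : ℂ) := by
      rw [Complex.sq_norm]
      exact Complex.mul_conj _
    have hfold : (∑ q : Fin (2^l), (starRingEnd ℂ) (x₀ q) * u k q) = γ k := rfl
    rw [hfold]
    linear_combination (-(Γ k)⁻¹ * (Γ k)⁻¹) * hgg2 + ((Γ k)⁻¹ * (Γ k)⁻¹) * key +
      ((Γ k)⁻¹ * Γ k + 1) * hinv
  -- the evolution equation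
  have hmain : (NormedSpace.exp ((-(Complex.I * τ)) • (H ⊗ₖ phat))).mulVec
      (fun p : Fin n × Fin (2 ^ l) => ψ₀ p.1 * x₀ p.2) =
      fun p : Fin n × Fin (2 ^ l) => ∑ j, α j * v j p.1 * u j p.2 := by
    classical
    set A : Matrix (Fin n × Fin (2^l)) (Fin n × Fin (2^l)) ℂ :=
      (-(Complex.I * τ)) • (H ⊗ₖ phat) with hA
    set b : Fin n → Fin (2^l) → (Fin n × Fin (2^l) → ℂ) :=
      fun j q p => v j p.1 * (if p.2 = q then 1 else 0) with hb
    have heigen : ∀ j q, A.mulVec (b j q) =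
        ((-(Complex.I * τ)) * ((lam j : ℂ) * (((q:ℕ):ℂ) / 2^l))) • b j q := by
      intro j q
      rw [hA, Matrix.smul_mulVec]
      have hk := kron_mulVec H phat (v j) (fun r : Fin (2^l) => if r = q then 1 else 0)
      rw [hb, hk, heig j, hphat]
      funext p
      simp only [Pi.smul_apply, smul_eq_mul, Matrix.mulVec_diagonal]
      by_cases h : p.2 = q
      · simp only [h, if_pos rfl]
        ring
      · simp only [if_neg h]
        ring
    have hexp : ∀ j q, (NormedSpace.exp A).mulVec (b j q) =
        Complex.exp ((-(Complex.I * τ)) * ((lam j : ℂ) * (((q:ℕ):ℂ) / 2^l))) • b j q :=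
      fun j q => exp_mulVec_eigen A (b j q) _ (heigen j q)
    have hdecomp : (fun p : Fin n × Fin (2^l) => ψ₀ p.1 * x₀ p.2) =
        ∑ j : Fin n, ∑ q : Fin (2^l), (α j * x₀ q) • b j q := by
      funext p
      simp only [Finset.sum_apply, Pi.smul_apply, smul_eq_mul, hb]
      rw [hψ₀, Finset.sum_mul]
      refine Finset.sum_congr rfl fun j _ => ?_
      rw [Finset.sum_eq_single p.2 (fun q _ hq => by simp [Ne.symm hq])
        (fun h => absurd (Finset.mem_univ _) h)]
      simp only [if_pos rfl, eq_self_iff_true, if_true, mul_one]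
      try simp
      try ring
    rw [hdecomp]
    have hlin : (NormedSpace.exp A).mulVec (∑ j, ∑ q, (α j * x₀ q) • b j q)
        = ∑ j : Fin n, ∑ q : Fin (2^l),
            (α j * x₀ q) • ((NormedSpace.exp A).mulVec (b j q)) := by
      simp only [← Matrix.mulVecLin_apply]
      rw [map_sum]
      exact Finset.sum_congr rfl fun j _ => by
        rw [map_sum]
        exact Finset.sum_congr rfl fun q _ => by rw [LinearMap.map_smul]
    rw [hlin]
    funext p
    simp only [Finset.sum_apply, hexp, Pi.smul_apply, smul_eq_mul]
    simp only [hb]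
    refine Finset.sum_congr rfl fun j _ => ?_
    rw [Finset.sum_eq_single p.2 (fun q _ hq => by simp [Ne.symm hq])
      (fun h => absurd (Finset.mem_univ _) h)]
    have harg : (-(Complex.I*τ))*((lam j:ℂ)*(((p.2:ℕ):ℂ)/2^l)) =
        (-(Complex.I*(lam j:ℂ)*(τ:ℂ)))*(((p.2:ℕ):ℂ)/2^l) := by ring
    rw [if_pos rfl, mul_one, harg, hu' j p.2]
    ring
  refine ⟨γ, Γ, w, ?_, ?_⟩
  · intro k hk
    exact ⟨rfl, hγlt k hk, hwunit k hk, horthw k hk, hΓgt k hk, hsq1 k hk⟩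
  · rw [hmain]
    funext p
    have hcollapse : ∀ k ∈ Finset.univ.erase i₀,
        α k * v k p.1 * (γ k * x₀ p.2 + Γ k * w k p.2) = α k * v k p.1 * u k p.2 := by
      intro k hk
      have hk' : k ≠ i₀ := Finset.ne_of_mem_erase hk
      congr 1
      simp only [hwdef]
      rw [← mul_assoc (Γ k), mul_inv_cancel₀ (hΓne k hk'), one_mul]
      ring
    rw [Finset.sum_congr rfl hcollapse]
    have := Finset.add_sum_erase Finset.univ (fun j => α j * v j p.1 * u j p.2)
      (Finset.mem_univ i₀)
    rw [← this]
    simp only [hui₀]
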